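/- Let d ≥ 1 and let M ∈ M_d(ℂ[X]) be a d × d matrix over the polynomial ring ℂ[X] with det M ≠ 0. Then multiplication by M on the free module ℂ[X]^d is injective, and the quotient module ℂ[X]^d / M·ℂ[X]^d is a finite-dimensional complex vector space whose dimension over ℂ equals the degree of the polynomial det M. -/

import Mathlib

open Polynomial Matrix

local notation "PC" => Polynomial ℂ

set_option maxHeartbeats 1000000

/-- For `M ∈ M_d(ℂ[X])` with `det M ≠ 0`, multiplication by `M` on
`ℂ[X]^d` is injective, and the quotient `ℂ[X]^d / M·ℂ[X]^d` is a finite-dimensional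
complex vector space of dimension `deg (det M)`. -/
theorem quotient_by_matrix_polynomial_finrank
    (d : ℕ) (hd : 1 ≤ d) (M : Matrix (Fin d) (Fin d) (Polynomial ℂ)) (hM : M.det ≠ 0) :
    Function.Injective M.mulVecLin ∧
      FiniteDimensional ℂ
        ((Fin d → Polynomial ℂ) ⧸
          (LinearMap.range M.mulVecLin).restrictScalars ℂ) ∧
      Module.finrank ℂ
        ((Fin d → Polynomial ℂ) ⧸
          (LinearMap.range M.mulVecLin).restrictScalars ℂ) = M.det.natDegree := by
  classical
  set N : Submodule PC (Fin d → PC) := LinearMap.range M.mulVecLin with hNdef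
  -- injectivity
  have hinj : Function.Injective M.mulVecLin := by
    rw [← LinearMap.ker_eq_bot, eq_bot_iff]
    intro v hv
    simp only [LinearMap.mem_ker, Matrix.mulVecLin_apply] at hv
    have h1 : M.adjugate.mulVec (M.mulVec v) = M.det • v := by
      rw [Matrix.mulVec_mulVec, Matrix.adjugate_mul, Matrix.smul_mulVec, Matrix.one_mulVec]
    rw [hv, Matrix.mulVec_zero] at h1
    have hv0 : v = 0 := by
      funext i
      have h2 := congrFun h1.symm i
      simp only [Pi.smul_apply, smul_eq_mul, Pi.zero_apply] at h2
      rcases mul_eq_zero.mp h2 with h | h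
      · exact absurd h hM
      · exact h
    simp [hv0]
  refine ⟨hinj, ?_⟩
  -- Smith normal form of N
  obtain ⟨n, snf⟩ := N.smithNormalForm (Pi.basisFun PC (Fin d))
  set eM : (Fin d → PC) ≃ₗ[PC] N := LinearEquiv.ofInjective M.mulVecLin hinj with heM
  have hnd : n = d := by
    have b1 : Module.Basis (Fin d) PC N := (Pi.basisFun PC (Fin d)).map eM
    have e := snf.bN.indexEquiv b1
    simpa using Fintype.card_congr e
  replace snf : Module.Basis.SmithNormalForm N (Fin d) d := hnd ▸ snf
  set a : Fin d → PC := snf.a with ha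
  set f := snf.f with hf
  have hfbij : Function.Bijective f := (Finite.injective_iff_bijective).mp f.injective
  set σ : Equiv.Perm (Fin d) := Equiv.ofBijective f hfbij with hσ
  have hσf : ∀ j, σ j = f j := fun j => rfl
  have hfs : ∀ i, f (σ.symm i) = i := fun i => σ.apply_symm_apply i
  -- the map T sending e_j to bN j
  set eT : N ≃ₗ[PC] (Fin d → PC) := snf.bN.equivFun with heT
  set T : (Fin d → PC) →ₗ[PC] (Fin d → PC) := N.subtype ∘ₗ eT.symm.toLinearMap with hT
  have hTapply : ∀ j, T (Pi.single j 1) = a j • snf.bM (f j) := by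
    intro j
    have h1 : eT.symm (Pi.single j 1) = snf.bN j := by
      rw [heT, Module.Basis.equivFun_symm_apply, Finset.sum_eq_single j]
      · simp
      · intro k _ hk; simp [Pi.single_apply, hk]
      · simp
    rw [hT]
    simp only [LinearMap.coe_comp, Function.comp_apply, LinearEquiv.coe_coe, h1,
      Submodule.coe_subtype]
    exact snf.snf j
  -- matrix of T in the standard basis
  have hmat : LinearMap.toMatrix (Pi.basisFun PC (Fin d)) (Pi.basisFun PC (Fin d)) T
      = ((Pi.basisFun PC (Fin d)).toMatrix snf.bM) * (Matrix.of fun k j => if k = σ j then a j else 0) := by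
    ext i j
    rw [LinearMap.toMatrix_apply]
    have : (Pi.basisFun PC (Fin d)) j = Pi.single j 1 := by
      simp [Pi.basisFun_apply]
    rw [this, hTapply]
    simp only [Pi.basisFun_repr, Pi.smul_apply, smul_eq_mul, Matrix.mul_apply,
      Module.Basis.toMatrix_apply, Pi.basisFun_repr]
    rw [Finset.sum_eq_single (σ j)]
    · simp [hσf, mul_comm]
    · intro k _ hk; simp [hk]
    · simp
  -- determinant computations
  have hAdet : Matrix.det (Matrix.of fun k j => if k = σ j then a j else 0)
      = (Equiv.Perm.sign σ : PC) * ∏ i, a i := by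
    have h : (Matrix.of fun k j => if k = σ j then a j else 0) =
        (Matrix.diagonal (a ∘ σ.symm)).submatrix id σ := by
      ext i j
      by_cases h : i = σ j
      · subst h; simp [Matrix.diagonal, Matrix.submatrix]
      · simp [Matrix.diagonal, Matrix.submatrix, h, Ne.symm h]
    rw [h, Matrix.det_permute', Matrix.det_diagonal]
    congr 1
    exact Equiv.prod_comp σ.symm a
  have hPunit : IsUnit (Matrix.det ((Pi.basisFun PC (Fin d)).toMatrix snf.bM)) := by
    apply IsUnit.of_mul_eq_one (Matrix.det (snf.bM.toMatrix (Pi.basisFun PC (Fin d))))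
    rw [← Matrix.det_mul, Module.Basis.toMatrix_mul_toMatrix_flip, Matrix.det_one]
  have hdetT : LinearMap.det T
      = Matrix.det ((Pi.basisFun PC (Fin d)).toMatrix snf.bM) * ((Equiv.Perm.sign σ : PC) * ∏ i, a i) := by
    rw [← LinearMap.det_toMatrix (Pi.basisFun PC (Fin d)), hmat, Matrix.det_mul, hAdet]
  -- the automorphism relating T and mulVecLin
  set β : (Fin d → PC) ≃ₗ[PC] (Fin d → PC) := eM.trans eT with hβ
  have hcomp : T ∘ₗ (β : (Fin d → PC) →ₗ[PC] (Fin d → PC)) = M.mulVecLin := by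
    apply LinearMap.ext
    intro x
    simp only [LinearMap.coe_comp, Function.comp_apply, LinearEquiv.coe_coe, hT, hβ,
      LinearEquiv.trans_apply, LinearEquiv.symm_apply_apply, Submodule.coe_subtype]
    exact congrArg Subtype.val (rfl : eM x = eM x)
  have hdetM : LinearMap.det M.mulVecLin = M.det := by
    have : M.mulVecLin = Matrix.toLin' M := by
      apply LinearMap.ext; intro x; rw [Matrix.toLin'_apply, Matrix.mulVecLin_apply]
    rw [this, LinearMap.det_toLin']
  have hβunit : IsUnit (LinearMap.det (β : (Fin d → PC) →ₗ[PC] (Fin d → PC))) :=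
    LinearEquiv.isUnit_det' β
  have hMdet_eq : M.det = (Matrix.det ((Pi.basisFun PC (Fin d)).toMatrix snf.bM)
      * (Equiv.Perm.sign σ : PC) * LinearMap.det (β : (Fin d → PC) →ₗ[PC] (Fin d → PC))) * ∏ i, a i := by
    rw [← hdetM, ← hcomp, LinearMap.det_comp, hdetT]
    ring
  have hσunit : IsUnit ((Equiv.Perm.sign σ : ℤ) : PC) := by
    rcases Int.units_eq_one_or (Equiv.Perm.sign σ) with h | h <;> rw [h] <;> simp
  have huunit : IsUnit (Matrix.det ((Pi.basisFun PC (Fin d)).toMatrix snf.bM)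
      * (Equiv.Perm.sign σ : PC) * LinearMap.det (β : (Fin d → PC) →ₗ[PC] (Fin d → PC))) :=
    (hPunit.mul hσunit).mul hβunit
  have hprod_ne : (∏ i, a i) ≠ 0 := by
    intro h0
    rw [hMdet_eq, h0, mul_zero] at hM
    exact hM rfl
  have hai : ∀ i, a i ≠ 0 := fun i =>
    Finset.prod_ne_zero_iff.mp hprod_ne i (Finset.mem_univ i)
  have hdeg : M.det.natDegree = ∑ i, (a i).natDegree := by
    rw [hMdet_eq, Polynomial.natDegree_mul huunit.ne_zero hprod_ne,
      Polynomial.natDegree_eq_zero_of_isUnit huunit, zero_add,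
      Polynomial.natDegree_prod _ _ (fun i _ => hai i)]
  -- membership characterization
  have key : ∀ (c : Fin d → PC) (i), snf.bM.repr (∑ j, c j • (snf.bN j : Fin d → PC)) i
      = a (σ.symm i) * c (σ.symm i) := by
    intro c i
    have hs : ∀ j, (snf.bN j : Fin d → PC) = a j • snf.bM (f j) := snf.snf
    simp only [hs, smul_smul, map_sum, _root_.map_smul, Finsupp.coe_finset_sum,
      Finset.sum_apply, Finsupp.coe_smul, Pi.smul_apply, smul_eq_mul, Module.Basis.repr_self]
    rw [Finset.sum_eq_single (σ.symm i)]
    · simp [hfs, Finsupp.single_apply]; ring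
    · intro k _ hk
      have hne : f k ≠ i := by
        intro h; apply hk
        have := congrArg σ.symm ((hσf k).trans h)
        simpa using this
      simp [Finsupp.single_apply, hne]
    · simp
  have mem_iff : ∀ x : Fin d → PC, x ∈ N ↔ ∀ i, a (σ.symm i) ∣ snf.bM.repr x i := by
    intro x
    rw [snf.bN.mem_submodule_iff']
    constructor
    · rintro ⟨c, rfl⟩ i
      exact ⟨c (σ.symm i), key c i⟩
    · intro h
      choose c' hc' using h
      refine ⟨fun j => c' (f j), ?_⟩
      apply snf.bM.repr.injective
      ext i
      rw [key]
      rw [hfs, ← hc']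
  -- N maps to a product of principal ideals
  have hNpi : Submodule.map (snf.bM.equivFun : (Fin d → PC) →ₗ[PC] (Fin d → PC)) N
      = Submodule.pi Set.univ (fun i => (Ideal.span {a (σ.symm i)} : Submodule PC PC)) := by
    have hres : ∀ (y : Fin d → PC) (i), snf.bM.repr (snf.bM.equivFun.symm y) i = y i := by
      intro y i
      rw [show snf.bM.equivFun.symm y = snf.bM.repr.symm (Finsupp.equivFunOnFinite.symm y) from rfl]
      simp
    apply le_antisymm
    · rintro y ⟨x, hx, rfl⟩
      rw [Submodule.mem_pi]
      intro i _
      rw [Ideal.mem_span_singleton]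
      simpa [Module.Basis.equivFun_apply] using (mem_iff x).mp hx i
    · intro y hy
      rw [Submodule.mem_pi] at hy
      refine ⟨snf.bM.equivFun.symm y, (mem_iff _).mpr fun i => ?_,
        snf.bM.equivFun.apply_symm_apply y⟩
      rw [hres]
      have := hy i (Set.mem_univ i)
      rwa [Ideal.mem_span_singleton] at this
  -- assemble the ℂ-linear equivalence
  let q2 : ((Fin d → PC) ⧸ N) ≃ₗ[PC]
      ((Fin d → PC) ⧸ Submodule.pi Set.univ (fun i => (Ideal.span {a (σ.symm i)} : Submodule PC PC))) :=
    Submodule.Quotient.equiv N _ snf.bM.equivFun hNpi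
  let q3 : ((Fin d → PC) ⧸ Submodule.pi Set.univ (fun i => (Ideal.span {a (σ.symm i)} : Submodule PC PC)))
      ≃ₗ[PC] Π i, PC ⧸ (Ideal.span {a (σ.symm i)} : Submodule PC PC) :=
    Submodule.quotientPi _
  let q : ((Fin d → PC) ⧸ N.restrictScalars ℂ) ≃ₗ[ℂ]
      Π i, PC ⧸ (Ideal.span {a (σ.symm i)} : Submodule PC PC) :=
    (Submodule.Quotient.restrictScalarsEquiv ℂ N).trans ((q2.trans q3).restrictScalars ℂ)
  have hfinpieces : ∀ i, FiniteDimensional ℂ (PC ⧸ (Ideal.span {a (σ.symm i)} : Submodule PC PC)) :=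
    fun i => (AdjoinRoot.powerBasis (hai (σ.symm i))).finite
  have hfrpieces : ∀ i, Module.finrank ℂ (PC ⧸ (Ideal.span {a (σ.symm i)} : Submodule PC PC))
      = (a (σ.symm i)).natDegree := by
    intro i
    have h := (AdjoinRoot.powerBasis (hai (σ.symm i))).finrank
    rwa [AdjoinRoot.powerBasis_dim] at h
  have hfinpi : FiniteDimensional ℂ (Π i, PC ⧸ (Ideal.span {a (σ.symm i)} : Submodule PC PC)) := by
    have := hfinpieces
    infer_instance
  refine ⟨q.symm.finiteDimensional, ?_⟩
  rw [q.finrank_eq, Module.finrank_pi_fintype, hdeg]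
  calc ∑ i, Module.finrank ℂ (PC ⧸ (Ideal.span {a (σ.symm i)} : Submodule PC PC))
      = ∑ i, (a (σ.symm i)).natDegree := by
        exact Finset.sum_congr rfl fun i _ => hfrpieces i
    _ = ∑ i, (a i).natDegree := Equiv.sum_comp σ.symm (fun i => (a i).natDegree)
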